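/- For 0 < τ ≤ 1/2 and any bounded random variable ξ, e_τ(ξ) ≥ inf{E_Q[ξ] : dQ/dP ≤ (1−τ)/τ a.s.}; that is, the expectile dominates the tail expectation (CVaR) at threshold τ/(1−τ). -/

import Mathlib

open MeasureTheory

/-- For `0 < τ ≤ 1/2` and bounded `ξ`, the expectile
`e_τ(ξ) = inf {E_Q[ξ] : Q ∈ S}` (with `S` the scenario set of densities `h` with
`a ≤ h ≤ ((1−τ)/τ) a` a.s. for some `a > 0`) dominates the tail expectation:
`e_τ(ξ) ≥ inf {E_Q[ξ] : 0 ≤ dQ/dP ≤ (1−τ)/τ a.s.}`. -/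
theorem stmt_5 {Ω : Type*} [MeasurableSpace Ω] (P : Measure Ω) [IsProbabilityMeasure P]
    (τ : ℝ) (hτ0 : 0 < τ) (hτ : τ ≤ 1 / 2)
    (ξ : Ω → ℝ) (hmeas : Measurable ξ) (C : ℝ) (hbdd : ∀ ω, |ξ ω| ≤ C) :
    sInf {r : ℝ | ∃ h : Ω → ℝ, Integrable h P ∧ (∫ ω, h ω ∂P = 1) ∧
        (∃ a > 0, ∀ᵐ ω ∂P, a ≤ h ω ∧ h ω ≤ (1 - τ) / τ * a) ∧
        r = ∫ ω, ξ ω * h ω ∂P} ≥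
      sInf {r : ℝ | ∃ h : Ω → ℝ, Integrable h P ∧ (∫ ω, h ω ∂P = 1) ∧
        (∀ᵐ ω ∂P, 0 ≤ h ω ∧ h ω ≤ (1 - τ) / τ) ∧
        r = ∫ ω, ξ ω * h ω ∂P} := by
  have hk : (1 : ℝ) ≤ (1 - τ) / τ := by
    rw [le_div_iff₀ hτ0]; linarith
  apply csInf_le_csInf
  · -- BddBelow of the big set by -C
    refine ⟨-C, ?_⟩
    rintro r ⟨h, hint, hint1, hbound, rfl⟩
    have hξh : Integrable (fun ω => ξ ω * h ω) P := by
      apply hint.bdd_mul hmeas.aestronglyMeasurable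
      exact Filter.Eventually.of_forall (fun ω => by simpa [Real.norm_eq_abs] using hbdd ω)
    have hCh : Integrable (fun ω => -C * h ω) P := hint.const_mul _
    have : ∫ ω, -C * h ω ∂P ≤ ∫ ω, ξ ω * h ω ∂P := by
      apply integral_mono_ae hCh hξh
      filter_upwards [hbound] with ω ⟨h0, _⟩
      have := (abs_le.mp (hbdd ω)).1
      nlinarith
    calc -C = -C * ∫ ω, h ω ∂P := by rw [hint1]; ring
    _ = ∫ ω, -C * h ω ∂P := (integral_const_mul _ _).symm
    _ ≤ _ := this
  · -- nonempty: h = 1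
    refine ⟨∫ ω, ξ ω * (1 : ℝ) ∂P, (fun _ => 1), integrable_const 1, by simp, ⟨1, one_pos, ?_⟩, rfl⟩
    filter_upwards with ω
    exact ⟨le_refl 1, by linarith⟩
  · -- subset
    rintro r ⟨h, hint, hint1, ⟨a, ha, hbound⟩, rfl⟩
    refine ⟨h, hint, hint1, ?_, rfl⟩
    have ha1 : a ≤ 1 := by
      have : ∫ _ω, a ∂P ≤ ∫ ω, h ω ∂P := by
        apply integral_mono_ae (integrable_const a) hint
        filter_upwards [hbound] with ω hb using hb.1
      simpa [hint1] using this
    filter_upwards [hbound] with ω ⟨h1, h2⟩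
    constructor
    · linarith
    · calc h ω ≤ (1 - τ) / τ * a := h2
      _ ≤ (1 - τ) / τ * 1 := by nlinarith
      _ = (1 - τ) / τ := mul_one _
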